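/- arXiv:1110.3572 — 5 statements merged into one kernel-verified Lean document; each statement's English description precedes it below -/
import Mathlib

section
/- Let (Ω, ℱ, P) be a probability space, (𝒢_n) a sequence of sub-σ-algebras of ℱ, and (U_n), (V_n) sequences of almost surely strictly positive real random variables such that: V_n is 𝒢_n-measurable for each n; each U_n and each U_n/V_n is integrable; U_n/V_n → 1 in probability; the family {U_n : n ∈ ℕ} is uniformly integrable; the sequence (U_n) is bounded in probability; and the sequence (1/V_n) is bounded in probability. Then E[U_n/V_n | 𝒢_n] → 1 in probability as n → ∞. -/
open MeasureTheory Filter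

set_option maxHeartbeats 1000000 in
private lemma condexp_ratio_aux {Ω : Type*} {m0 : MeasurableSpace Ω} (P : Measure Ω)
    [IsProbabilityMeasure P]
    (𝒢 : ℕ → MeasurableSpace Ω) (h𝒢 : ∀ n, 𝒢 n ≤ m0)
    (U V : ℕ → Ω → ℝ)
    (hUmeas : ∀ n, StronglyMeasurable[m0] (U n))
    (hUpos : ∀ n, ∀ᵐ ω ∂P, 0 < U n ω)
    (hVpos : ∀ n, ∀ᵐ ω ∂P, 0 < V n ω)
    (hVmeas : ∀ n, StronglyMeasurable[𝒢 n] (V n))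
    (hUint : ∀ n, Integrable (U n) P)
    (hUVint : ∀ n, Integrable (fun ω => U n ω / V n ω) P)
    (hUVone : ∀ ε > (0 : ℝ),
      Tendsto (fun n => P {ω | ε < |U n ω / V n ω - 1|}) atTop (nhds 0))
    (hUunif : ∀ ε > (0 : ℝ), ∃ M > (0 : ℝ), ∀ n,
      (∫ ω in {ω | M < |U n ω|}, |U n ω| ∂P) < ε)
    (hVinvbdd : ∀ ε > (0 : ℝ), ∃ M > (0 : ℝ), ∀ n,
      P {ω | M < |1 / V n ω|} < ENNReal.ofReal ε) :
    ∀ ε > (0 : ℝ),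
      Tendsto (fun n => P {ω | ε < |(P[fun ω => U n ω / V n ω | 𝒢 n]) ω - 1|})
        atTop (nhds 0) := by
  intro ε hε
  rw [ENNReal.tendsto_nhds_zero]
  intro η hη
  obtain ⟨r, hr, hrη⟩ : ∃ r : ℝ, 0 < r ∧ ENNReal.ofReal r ≤ η := by
    rcases eq_or_ne η ⊤ with h | h
    · exact ⟨1, one_pos, by simp [h]⟩
    · exact ⟨η.toReal, ENNReal.toReal_pos hη.ne' h, by rw [ENNReal.ofReal_toReal h]⟩
  obtain ⟨M, hM, hMbdd⟩ := hVinvbdd (r / 3) (by positivity)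
  obtain ⟨L, hL, hLunif⟩ := hUunif (ε * r / (12 * M)) (by positivity)
  set ε' : ℝ := min 1 (ε * r / 12) with hε'def
  have hε'pos : 0 < ε' := lt_min one_pos (by positivity)
  have hε'le1 : ε' ≤ 1 := min_le_left _ _
  have hε'le : ε' ≤ ε * r / 12 := min_le_right _ _
  have h1 : ∀ᶠ n in atTop,
      P {ω | 1 < |U n ω / V n ω - 1|} ≤ ENNReal.ofReal (ε * r / (12 * M * L)) :=
    (hUVone 1 one_pos).eventually_le_const (ENNReal.ofReal_pos.2 (by positivity))
  have h2 : ∀ᶠ n in atTop,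
      P {ω | ε' < |U n ω / V n ω - 1|} ≤ ENNReal.ofReal (ε * r / 12) :=
    (hUVone ε' hε'pos).eventually_le_const (ENNReal.ofReal_pos.2 (by positivity))
  filter_upwards [h1, h2] with n hn1 hn2
  have hm : 𝒢 n ≤ m0 := h𝒢 n
  set R : Ω → ℝ := fun ω => U n ω / V n ω with hRdef
  have hn1' : P {ω | 1 < |R ω - 1|} ≤ ENNReal.ofReal (ε * r / (12 * M * L)) := by
    simpa only [hRdef] using hn1
  have hn2' : P {ω | ε' < |R ω - 1|} ≤ ENNReal.ofReal (ε * r / 12) := by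
    simpa only [hRdef] using hn2
  have hVm0 : StronglyMeasurable[m0] (V n) := (hVmeas n).mono hm
  have hRmeas : StronglyMeasurable[m0] R :=
    ((hUmeas n).measurable.div hVm0.measurable).stronglyMeasurable
  have hRint : Integrable R P := hUVint n
  have hRpos : ∀ᵐ ω ∂P, 0 < R ω := by
    filter_upwards [hUpos n, hVpos n] with ω h1 h2
    exact div_pos h1 h2
  set f1 : Ω → ℝ := fun ω => min (R ω) 2 - 1 with hf1def
  set h : Ω → ℝ := fun ω => max (U n ω - 2 * V n ω) 0 with hhdef
  set f2 : Ω → ℝ := fun ω => max (R ω - 2) 0 with hf2def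
  have hf1meas : StronglyMeasurable[m0] f1 :=
    ((hRmeas.measurable.min measurable_const).sub measurable_const).stronglyMeasurable
  have hhmeas : StronglyMeasurable[m0] h :=
    (((hUmeas n).measurable.sub (measurable_const.mul hVm0.measurable)).max
      measurable_const).stronglyMeasurable
  have hf2meas : StronglyMeasurable[m0] f2 :=
    ((hRmeas.measurable.sub measurable_const).max measurable_const).stronglyMeasurable
  have hf1int : Integrable f1 P := by
    refine (hRint.abs.add (integrable_const 3)).mono' hf1meas.aestronglyMeasurable
      (ae_of_all _ fun ω => ?_)
    simp only [hf1def, Real.norm_eq_abs, Pi.add_apply]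
    have ha : -|R ω| ≤ min (R ω) 2 :=
      le_min (neg_abs_le _) (by linarith [abs_nonneg (R ω)])
    have hb : min (R ω) 2 ≤ 2 := min_le_right _ _
    rw [abs_le]; constructor <;> linarith
  have hhint : Integrable h P := by
    refine (hUint n).abs.mono' hhmeas.aestronglyMeasurable ?_
    filter_upwards [hVpos n] with ω hv
    simp only [hhdef, Real.norm_eq_abs]
    rw [abs_of_nonneg (le_max_right _ _)]
    exact max_le (by nlinarith [le_abs_self (U n ω)]) (abs_nonneg _)
  have hf2int : Integrable f2 P := by
    refine (hRint.abs.add (integrable_const 2)).mono' hf2meas.aestronglyMeasurable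
      (ae_of_all _ fun ω => ?_)
    simp only [hf2def, Real.norm_eq_abs, Pi.add_apply]
    rw [abs_of_nonneg (le_max_right _ _)]
    exact max_le (by linarith [le_abs_self (R ω)]) (by linarith [abs_nonneg (R ω)])
  have hdecomp : (fun ω => R ω - 1) = f1 + f2 := by
    funext ω
    simp only [hf1def, hf2def, Pi.add_apply]
    rcases le_total (R ω) 2 with hc | hc
    · rw [min_eq_left hc, max_eq_right (by linarith)]; ring
    · rw [min_eq_right hc, max_eq_left (by linarith)]; ring
  have hceR : P[fun ω => R ω - 1|𝒢 n] =ᵐ[P] fun ω => (P[R|𝒢 n]) ω - 1 := by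
    have ha := condExp_sub (m := 𝒢 n) (μ := P) hRint (integrable_const (1 : ℝ))
    have hb : P[fun _ : Ω => (1 : ℝ)|𝒢 n] = fun _ => 1 := condExp_const hm 1
    filter_upwards [ha] with ω hω
    have := hω; simp only [hb] at this; exact this
  have hceAdd : P[fun ω => R ω - 1|𝒢 n] =ᵐ[P] P[f1|𝒢 n] + P[f2|𝒢 n] := by
    rw [hdecomp]; exact condExp_add hf1int hf2int _
  have hf2eq : f2 =ᵐ[P] (fun ω => (V n ω)⁻¹) * h := by
    filter_upwards [hVpos n] with ω hv
    simp only [hf2def, hhdef, Pi.mul_apply]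
    rw [mul_max_of_nonneg _ _ (by positivity : (0:ℝ) ≤ (V n ω)⁻¹), mul_zero]
    congr 1
    simp only [hRdef]
    field_simp
  have hVinvh_int : Integrable ((fun ω => (V n ω)⁻¹) * h) P := hf2int.congr hf2eq
  have hpull : P[f2|𝒢 n] =ᵐ[P] (fun ω => (V n ω)⁻¹) * P[h|𝒢 n] :=
    (condExp_congr_ae hf2eq).trans
      (condExp_mul_of_stronglyMeasurable_left ((hVmeas n).measurable.inv.stronglyMeasurable)
        hVinvh_int hhint)
  have hhnn : 0 ≤ᵐ[P] h := ae_of_all _ fun ω => by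
    simp only [hhdef, Pi.zero_apply]; exact le_max_right _ _
  have hqnn : 0 ≤ᵐ[P] P[h|𝒢 n] := condExp_nonneg hhnn
  set A1 : Set Ω := {ω | ε / 2 ≤ |(P[f1|𝒢 n]) ω|} with hA1def
  set A2 : Set Ω := {ω | M < |1 / V n ω|} with hA2def
  set A3 : Set Ω := {ω | ε / (2 * M) ≤ (P[h|𝒢 n]) ω} with hA3def
  -- a.e. inclusion
  have hsub : P {ω | ε < |(P[R|𝒢 n]) ω - 1|} ≤ P ((A1 ∪ A2) ∪ A3) := by
    refine measure_mono_ae ?_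
    filter_upwards [hceR, hceAdd, hpull, hqnn, hVpos n] with ω e1 e2 e3 hq hv hωS
    have hq' : 0 ≤ (P[h|𝒢 n]) ω := hq
    by_cases hA1 : ε / 2 ≤ |(P[f1|𝒢 n]) ω|
    · exact Or.inl (Or.inl hA1)
    by_cases hA2 : M < |1 / V n ω|
    · exact Or.inl (Or.inr hA2)
    right
    push_neg at hA1 hA2
    have hvinv : (0 : ℝ) ≤ (V n ω)⁻¹ := by positivity
    have hvM : (V n ω)⁻¹ ≤ M := by
      rwa [one_div, abs_of_nonneg hvinv] at hA2
    have key : (P[R|𝒢 n]) ω - 1 = (P[f1|𝒢 n]) ω + (V n ω)⁻¹ * (P[h|𝒢 n]) ω := by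
      have e2' : (P[fun ω => R ω - 1|𝒢 n]) ω = (P[f1|𝒢 n]) ω + (P[f2|𝒢 n]) ω := e2
      have e3' : (P[f2|𝒢 n]) ω = (V n ω)⁻¹ * (P[h|𝒢 n]) ω := e3
      rw [← e1, e2', e3']
    have hS : ε < |(P[R|𝒢 n]) ω - 1| := hωS
    rw [key] at hS
    have habs : |(P[f1|𝒢 n]) ω + (V n ω)⁻¹ * (P[h|𝒢 n]) ω|
        ≤ |(P[f1|𝒢 n]) ω| + (V n ω)⁻¹ * (P[h|𝒢 n]) ω := by
      calc _ ≤ |(P[f1|𝒢 n]) ω| + |(V n ω)⁻¹ * (P[h|𝒢 n]) ω| := abs_add_le _ _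
        _ = _ := by rw [abs_of_nonneg (mul_nonneg hvinv hq')]
    have h5 : ε / 2 < (V n ω)⁻¹ * (P[h|𝒢 n]) ω := by linarith
    have h6 : (V n ω)⁻¹ * (P[h|𝒢 n]) ω ≤ M * (P[h|𝒢 n]) ω :=
      mul_le_mul_of_nonneg_right hvM hq'
    show ε / (2 * M) ≤ (P[h|𝒢 n]) ω
    rw [div_le_iff₀ (by positivity)]
    nlinarith
  -- bound on A1
  have hPA1 : P A1 ≤ ENNReal.ofReal (r / 3) := by
    set B : Set Ω := {ω | ε' < |R ω - 1|} with hBdef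
    have hBmeas : MeasurableSet B :=
      measurableSet_lt measurable_const ((hRmeas.measurable.sub measurable_const).abs)
    have hbound : ∀ᵐ ω ∂P, |f1 ω| ≤ ε' + B.indicator (fun _ => (1 : ℝ)) ω := by
      filter_upwards [hRpos] with ω hRω
      by_cases hB : ω ∈ B
      · rw [Set.indicator_of_mem hB]
        simp only [hf1def]
        have ha : min (R ω) 2 ≤ 2 := min_le_right _ _
        have hb : 0 < min (R ω) 2 := lt_min hRω two_pos
        rw [abs_le]; constructor <;> linarith
      · rw [Set.indicator_of_notMem hB]
        have hB' : |R ω - 1| ≤ ε' := not_lt.1 hB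
        have hR2 : R ω ≤ 2 := by
          have := (abs_le.1 hB').2; linarith
        simp only [hf1def]
        rw [min_eq_left hR2]
        simpa using hB'
    have hindint : Integrable (B.indicator fun _ => (1 : ℝ)) P :=
      (integrable_const 1).indicator hBmeas
    have hf1abs : ∫ ω, |f1 ω| ∂P ≤ ε' + (P B).toReal := by
      calc ∫ ω, |f1 ω| ∂P
          ≤ ∫ ω, (ε' + B.indicator (fun _ => (1 : ℝ)) ω) ∂P :=
            integral_mono_ae hf1int.abs ((integrable_const ε').add hindint) hbound
        _ = ε' + (P B).toReal := by
            rw [integral_add (integrable_const _) hindint, integral_const,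
              integral_indicator_const (1 : ℝ) hBmeas]
            simp [measureReal_def]
    have hPB : (P B).toReal ≤ ε * r / 12 :=
      ENNReal.toReal_le_of_le_ofReal (by positivity) hn2'
    have hmk : ε / 2 * (P A1).toReal ≤ ∫ ω, |(P[f1|𝒢 n]) ω| ∂P := by
      have := mul_meas_ge_le_integral_of_nonneg
        (ae_of_all P fun ω => abs_nonneg ((P[f1|𝒢 n]) ω))
        integrable_condExp.abs (ε / 2)
      simpa [measureReal_def] using this
    have hmk2 : ∫ ω, |(P[f1|𝒢 n]) ω| ∂P ≤ ∫ ω, |f1 ω| ∂P := integral_abs_condExp_le f1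
    have htR : (P A1).toReal ≤ r / 3 := by nlinarith
    calc P A1 = ENNReal.ofReal (P A1).toReal :=
          (ENNReal.ofReal_toReal (measure_ne_top _ _)).symm
      _ ≤ ENNReal.ofReal (r / 3) := ENNReal.ofReal_le_ofReal htR
  -- bound on A3
  have hPA3 : P A3 ≤ ENNReal.ofReal (r / 3) := by
    set B1 : Set Ω := {ω | 1 < |R ω - 1|} with hB1def
    set C : Set Ω := {ω | L < |U n ω|} with hCdef
    have hB1meas : MeasurableSet B1 :=
      measurableSet_lt measurable_const ((hRmeas.measurable.sub measurable_const).abs)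
    have hCmeas : MeasurableSet C :=
      measurableSet_lt measurable_const (hUmeas n).measurable.abs
    have hbound : ∀ᵐ ω ∂P, h ω ≤
        C.indicator (fun ω => |U n ω|) ω + B1.indicator (fun _ => L) ω := by
      filter_upwards [hUpos n, hVpos n] with ω hu hv
      by_cases hUL : ω ∈ C
      · rw [Set.indicator_of_mem hUL]
        have ha : h ω ≤ |U n ω| := by
          simp only [hhdef]
          exact max_le (by nlinarith [le_abs_self (U n ω)]) (abs_nonneg _)
        have hb : 0 ≤ B1.indicator (fun _ => L) ω :=
          Set.indicator_nonneg (fun _ _ => hL.le) ω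
        linarith
      · rw [Set.indicator_of_notMem hUL]
        have hUL' : |U n ω| ≤ L := not_lt.1 hUL
        by_cases hR2 : U n ω ≤ 2 * V n ω
        · have : h ω = 0 := by simp only [hhdef]; rw [max_eq_right (by linarith)]
          have hb : 0 ≤ B1.indicator (fun _ => L) ω :=
            Set.indicator_nonneg (fun _ _ => hL.le) ω
          linarith
        · push_neg at hR2
          have hmem : ω ∈ B1 := by
            show 1 < |R ω - 1|
            have h2R : 2 < R ω := by
              simp only [hRdef]
              rw [lt_div_iff₀ hv]; linarith
            calc (1 : ℝ) < R ω - 1 := by linarith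
              _ ≤ |R ω - 1| := le_abs_self _
          rw [Set.indicator_of_mem hmem]
          have : h ω ≤ L := by
            simp only [hhdef]
            exact max_le (by nlinarith [le_abs_self (U n ω)]) hL.le
          linarith
    have hCint : Integrable (C.indicator fun ω => |U n ω|) P :=
      (hUint n).abs.indicator hCmeas
    have hB1int : Integrable (B1.indicator fun _ => L) P :=
      (integrable_const L).indicator hB1meas
    have hinth : ∫ ω, h ω ∂P ≤ (∫ ω in C, |U n ω| ∂P) + L * (P B1).toReal := by
      calc ∫ ω, h ω ∂P
          ≤ ∫ ω, (C.indicator (fun ω => |U n ω|) ω + B1.indicator (fun _ => L) ω) ∂P :=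
            integral_mono_ae hhint (hCint.add hB1int) hbound
        _ = (∫ ω in C, |U n ω| ∂P) + L * (P B1).toReal := by
            rw [integral_add hCint hB1int, integral_indicator hCmeas,
              integral_indicator_const L hB1meas]
            simp [mul_comm, measureReal_def]
    have hPB1 : (P B1).toReal ≤ ε * r / (12 * M * L) :=
      ENNReal.toReal_le_of_le_ofReal (by positivity) hn1'
    have hC : (∫ ω in C, |U n ω| ∂P) < ε * r / (12 * M) := hLunif n
    have hinth2 : ∫ ω, h ω ∂P ≤ ε * r / (6 * M) := by
      have : L * (P B1).toReal ≤ ε * r / (12 * M) := by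
        calc L * (P B1).toReal ≤ L * (ε * r / (12 * M * L)) :=
              mul_le_mul_of_nonneg_left hPB1 hL.le
          _ = ε * r / (12 * M) := by field_simp
      have : (∫ ω, h ω ∂P) ≤ ε * r / (12 * M) + ε * r / (12 * M) := by linarith
      calc (∫ ω, h ω ∂P) ≤ ε * r / (12 * M) + ε * r / (12 * M) := this
        _ = ε * r / (6 * M) := by ring
    have hmk : ε / (2 * M) * (P A3).toReal ≤ ∫ ω, (P[h|𝒢 n]) ω ∂P := by
      have := mul_meas_ge_le_integral_of_nonneg hqnn integrable_condExp (ε / (2 * M))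
      simpa [measureReal_def] using this
    have hceq : ∫ ω, (P[h|𝒢 n]) ω ∂P = ∫ ω, h ω ∂P := integral_condExp hm
    have htR : (P A3).toReal ≤ r / 3 := by
      have h7 : ε / (2 * M) * (P A3).toReal ≤ ε * r / (6 * M) := by
        rw [hceq] at hmk; linarith
      have h8 : (P A3).toReal ≤ (ε * r / (6 * M)) / (ε / (2 * M)) := by
        rw [le_div_iff₀ (by positivity : (0:ℝ) < ε / (2 * M)), mul_comm]
        exact h7
      have h9 : (ε * r / (6 * M)) / (ε / (2 * M)) = r / 3 := by
        field_simp; ring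
      linarith [h9 ▸ h8]
    calc P A3 = ENNReal.ofReal (P A3).toReal :=
          (ENNReal.ofReal_toReal (measure_ne_top _ _)).symm
      _ ≤ ENNReal.ofReal (r / 3) := ENNReal.ofReal_le_ofReal htR
  have hPA2 : P A2 ≤ ENNReal.ofReal (r / 3) := (hMbdd n).le
  calc P {ω | ε < |(P[R|𝒢 n]) ω - 1|} ≤ P ((A1 ∪ A2) ∪ A3) := hsub
    _ ≤ P (A1 ∪ A2) + P A3 := measure_union_le _ _
    _ ≤ P A1 + P A2 + P A3 := by
        exact add_le_add_left (measure_union_le _ _) _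
    _ ≤ ENNReal.ofReal (r / 3) + ENNReal.ofReal (r / 3) + ENNReal.ofReal (r / 3) :=
        add_le_add (add_le_add hPA1 hPA2) hPA3
    _ = ENNReal.ofReal r := by
        rw [← ENNReal.ofReal_add (by positivity) (by positivity),
          ← ENNReal.ofReal_add (by positivity) (by positivity)]
        congr 1
        ring
    _ ≤ η := hrη

/-- Abstract form of Proposition 1: if `V_n` is `𝒢_n`-measurable, `U_n/V_n → 1` in
probability, `{U_n}` is uniformly integrable, and `(U_n)` and `(1/V_n)` are bounded in
probability, then `E[U_n/V_n | 𝒢_n] → 1` in probability. -/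
theorem condexp_ratio_tendsto_one_in_probability
    {Ω : Type*} {m0 : MeasurableSpace Ω} (P : Measure Ω) [IsProbabilityMeasure P]
    (𝒢 : ℕ → MeasurableSpace Ω) (h𝒢 : ∀ n, 𝒢 n ≤ m0)
    (U V : ℕ → Ω → ℝ)
    (hUpos : ∀ n, ∀ᵐ ω ∂P, 0 < U n ω)
    (hVpos : ∀ n, ∀ᵐ ω ∂P, 0 < V n ω)
    (hVmeas : ∀ n, StronglyMeasurable[𝒢 n] (V n))
    (hUint : ∀ n, Integrable (U n) P)
    (hUVint : ∀ n, Integrable (fun ω => U n ω / V n ω) P)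
    (hUVone : ∀ ε > (0 : ℝ),
      Tendsto (fun n => P {ω | ε < |U n ω / V n ω - 1|}) atTop (nhds 0))
    (hUunif : ∀ ε > (0 : ℝ), ∃ M > (0 : ℝ), ∀ n,
      (∫ ω in {ω | M < |U n ω|}, |U n ω| ∂P) < ε)
    (hUbdd : ∀ ε > (0 : ℝ), ∃ M > (0 : ℝ), ∀ n,
      P {ω | M < |U n ω|} < ENNReal.ofReal ε)
    (hVinvbdd : ∀ ε > (0 : ℝ), ∃ M > (0 : ℝ), ∀ n,
      P {ω | M < |1 / V n ω|} < ENNReal.ofReal ε) :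
    ∀ ε > (0 : ℝ),
      Tendsto (fun n => P {ω | ε < |(P[fun ω => U n ω / V n ω | 𝒢 n]) ω - 1|})
        atTop (nhds 0) := by
  set U' : ℕ → Ω → ℝ := fun n => ((hUint n).aestronglyMeasurable).mk (U n) with hU'def
  have hU'meas : ∀ n, StronglyMeasurable[m0] (U' n) := fun n =>
    (hUint n).aestronglyMeasurable.stronglyMeasurable_mk
  have hUU' : ∀ n, U n =ᵐ[P] U' n := fun n => (hUint n).aestronglyMeasurable.ae_eq_mk
  have hU'pos : ∀ n, ∀ᵐ ω ∂P, 0 < U' n ω := fun n => by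
    filter_upwards [hUpos n, hUU' n] with ω h1 h2
    rwa [← h2]
  have hU'int : ∀ n, Integrable (U' n) P := fun n => (hUint n).congr (hUU' n)
  have hU'Vint : ∀ n, Integrable (fun ω => U' n ω / V n ω) P := fun n =>
    (hUVint n).congr (by filter_upwards [hUU' n] with ω h; rw [h])
  have hsets : ∀ (n : ℕ) (c : ℝ),
      P {ω | c < |U' n ω / V n ω - 1|} = P {ω | c < |U n ω / V n ω - 1|} := by
    intro n c
    refine measure_congr ?_
    filter_upwards [hUU' n] with ω h
    show (c < |U' n ω / V n ω - 1|) = (c < |U n ω / V n ω - 1|)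
    rw [h]
  have hU'Vone : ∀ c > (0 : ℝ),
      Tendsto (fun n => P {ω | c < |U' n ω / V n ω - 1|}) atTop (nhds 0) := by
    intro c hc
    simp only [hsets]
    exact hUVone c hc
  have hU'unif : ∀ c > (0 : ℝ), ∃ M > (0 : ℝ), ∀ n,
      (∫ ω in {ω | M < |U' n ω|}, |U' n ω| ∂P) < c := by
    intro c hc
    obtain ⟨M, hM, hMn⟩ := hUunif c hc
    refine ⟨M, hM, fun n => ?_⟩
    have h1 : ∫ ω in {ω | M < |U' n ω|}, |U' n ω| ∂P
        = ∫ ω in {ω | M < |U n ω|}, |U n ω| ∂P := by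
      rw [setIntegral_congr_set (by
        filter_upwards [hUU' n] with ω h
        show (M < |U' n ω|) = (M < |U n ω|)
        rw [h])]
      exact integral_congr_ae (ae_restrict_of_ae
        (by filter_upwards [hUU' n] with ω h; rw [h]))
    rw [h1]
    exact hMn n
  intro ε hε
  have haux := condexp_ratio_aux P 𝒢 h𝒢 U' V hU'meas hU'pos hVpos hVmeas hU'int hU'Vint
    hU'Vone hU'unif hVinvbdd ε hε
  refine haux.congr fun n => ?_
  refine measure_congr ?_
  have hce : P[fun ω => U' n ω / V n ω|𝒢 n] =ᵐ[P] P[fun ω => U n ω / V n ω|𝒢 n] :=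
    condExp_congr_ae (by filter_upwards [hUU' n] with ω h; rw [h])
  filter_upwards [hce] with ω h
  show (ε < |(P[fun ω => U' n ω / V n ω|𝒢 n]) ω - 1|)
      = (ε < |(P[fun ω => U n ω / V n ω|𝒢 n]) ω - 1|)
  rw [h]
end

section
/- Let p ≥ 2 be an integer, θ ∈ (−1/(p−1), 1), C = (1−θ) I_p + θ J_p the exchangeable correlation matrix, B = C⁻¹, and Ċ = J_p − I_p (the entrywise derivative of C with respect to θ). Set γ = 1 / (1 + (p−1)θ). Then (1/2) · tr( B Ċ B Ċ ) = p (p γ² − 2γ + 1) / (2 (1−θ)²). -/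
open Matrix

/-- Fisher information `I_{θθ} = (1/2) tr(BĊBĊ)` for the exchangeable correlation
model: with `C = (1-θ)I + θJ`, `B = C⁻¹`, `Ċ = J - I` and `γ = 1/(1+(p-1)θ)`,
`(1/2) tr(BĊBĊ) = p (p γ² - 2γ + 1) / (2(1-θ)²)`. -/
theorem exchangeable_information_known_margins
    (p : ℕ) (hp : 2 ≤ p) (θ : ℝ)
    (hθlo : -(1 / ((p : ℝ) - 1)) < θ) (hθhi : θ < 1)
    (J : Matrix (Fin p) (Fin p) ℝ) (hJ : ∀ i j, J i j = 1)
    (C : Matrix (Fin p) (Fin p) ℝ)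
    (hC : C = (1 - θ) • (1 : Matrix (Fin p) (Fin p) ℝ) + θ • J)
    (B : Matrix (Fin p) (Fin p) ℝ) (hB : B = C⁻¹)
    (Cdot : Matrix (Fin p) (Fin p) ℝ)
    (hCdot : Cdot = J - (1 : Matrix (Fin p) (Fin p) ℝ))
    (γ : ℝ) (hγ : γ = 1 / (1 + ((p : ℝ) - 1) * θ)) :
    (1 / 2) * (B * Cdot * B * Cdot).trace
      = (p : ℝ) * ((p : ℝ) * γ ^ 2 - 2 * γ + 1) / (2 * (1 - θ) ^ 2) := by
  have hp1 : (2:ℝ) ≤ (p:ℝ) := by exact_mod_cast hp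
  have hpm : (0:ℝ) < (p:ℝ) - 1 := by linarith
  have h1θ : (1:ℝ) - θ ≠ 0 := by intro h; linarith
  have hinv : ((p:ℝ) - 1) * (1 / ((p:ℝ) - 1)) = 1 := mul_one_div_cancel hpm.ne'
  have hd : (0:ℝ) < 1 + ((p:ℝ) - 1) * θ := by nlinarith
  have hd' : (1:ℝ) + ((p:ℝ) - 1) * θ ≠ 0 := hd.ne'
  have hG : γ * (1 + ((p:ℝ) - 1) * θ) = 1 := by
    rw [hγ]; field_simp
  have hJJ : J * J = (p:ℝ) • J := by
    ext i j
    simp [Matrix.mul_apply, hJ, Finset.sum_const, Finset.card_univ]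
  have htrJ : J.trace = (p:ℝ) := by
    simp [Matrix.trace, Matrix.diag, hJ]
  set N : Matrix (Fin p) (Fin p) ℝ := 1 - (θ * γ) • J with hN
  -- C * N = (1-θ) • 1
  have hCN : C * N = (1 - θ) • (1 : Matrix (Fin p) (Fin p) ℝ) := by
    rw [hC, hN]
    simp only [add_mul, mul_sub, sub_mul, Matrix.smul_mul, Matrix.mul_smul,
      one_mul, mul_one, hJJ, smul_smul]
    match_scalars
    · ring
    · linear_combination -θ * hG
  -- hence B = (1/(1-θ)) • N
  have hB' : B = (1 / (1 - θ)) • N := by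
    rw [hB]
    apply inv_eq_right_inv
    rw [Matrix.mul_smul, hCN, smul_smul]
    rw [show (1 / (1 - θ)) * (1 - θ) = 1 from by field_simp]
    rw [one_smul]
  -- N * Cdot = γ • J - 1
  have hNC : N * Cdot = γ • J - (1 : Matrix (Fin p) (Fin p) ℝ) := by
    rw [hN, hCdot]
    simp only [sub_mul, mul_sub, Matrix.smul_mul, Matrix.mul_smul,
      one_mul, mul_one, hJJ, smul_smul]
    match_scalars
    · linear_combination -hG
    · ring
  -- square of γ•J - 1
  have hMM : (γ • J - (1 : Matrix (Fin p) (Fin p) ℝ)) * (γ • J - 1)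
      = (γ * γ * (p:ℝ) - 2 * γ) • J + (1 : Matrix (Fin p) (Fin p) ℝ) := by
    simp only [sub_mul, mul_sub, Matrix.smul_mul, Matrix.mul_smul,
      one_mul, mul_one, hJJ, smul_smul]
    match_scalars
    · ring
    · ring
  have hfull : B * Cdot * B * Cdot
      = ((1 / (1 - θ)) * (1 / (1 - θ))) •
        ((γ * γ * (p:ℝ) - 2 * γ) • J + (1 : Matrix (Fin p) (Fin p) ℝ)) := by
    calc B * Cdot * B * Cdot = (B * Cdot) * (B * Cdot) := by
          rw [Matrix.mul_assoc, Matrix.mul_assoc]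
      _ = ((1 / (1 - θ)) • (N * Cdot)) * ((1 / (1 - θ)) • (N * Cdot)) := by
          rw [hB', Matrix.smul_mul, Matrix.smul_mul]
      _ = ((1 / (1 - θ)) * (1 / (1 - θ))) • ((N * Cdot) * (N * Cdot)) := by
          rw [Matrix.smul_mul, Matrix.mul_smul, smul_smul]
      _ = _ := by rw [hNC, hMM]
  rw [hfull, Matrix.trace_smul, Matrix.trace_add, Matrix.trace_smul,
    Matrix.trace_one, htrJ]
  simp only [smul_eq_mul, Finset.card_univ, Fintype.card_fin]
  field_simp
end

section
/- Let p ≥ 2 be an integer, θ ∈ (−1/(p−1), 1), C = (1−θ) I_p + θ J_p the exchangeable correlation matrix, B = C⁻¹, and Ċ = J_p − I_p. Then (1/2) [ tr( B Ċ B Ċ ) − tr( B Ċ )² / p ] = p (p−1) / ( 2 ((p−1)θ + 1)² (1−θ)² ). In particular, for p = 2 this equals 1/(1−θ²)², the information bound of the bivariate normal copula model. -/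
open Matrix

/-- Efficient Fisher information for the exchangeable correlation model:
with `C = (1-θ)I + θJ`, `B = C⁻¹`, `Ċ = J - I`,
`(1/2)[tr(BĊBĊ) - tr(BĊ)²/p] = p(p-1) / (2((p-1)θ+1)²(1-θ)²)`; in particular, for
`p = 2` this equals `1/(1-θ²)²`. -/
theorem exchangeable_efficient_information
    (p : ℕ) (hp : 2 ≤ p) (θ : ℝ)
    (hθlo : -(1 / ((p : ℝ) - 1)) < θ) (hθhi : θ < 1)
    (J : Matrix (Fin p) (Fin p) ℝ) (hJ : ∀ i j, J i j = 1)
    (C : Matrix (Fin p) (Fin p) ℝ)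
    (hC : C = (1 - θ) • (1 : Matrix (Fin p) (Fin p) ℝ) + θ • J)
    (B : Matrix (Fin p) (Fin p) ℝ) (hB : B = C⁻¹)
    (Cdot : Matrix (Fin p) (Fin p) ℝ)
    (hCdot : Cdot = J - (1 : Matrix (Fin p) (Fin p) ℝ)) :
    (1 / 2) * ((B * Cdot * B * Cdot).trace - (B * Cdot).trace ^ 2 / p)
        = (p : ℝ) * ((p : ℝ) - 1) / (2 * (((p : ℝ) - 1) * θ + 1) ^ 2 * (1 - θ) ^ 2) ∧
    (p = 2 →
      (1 / 2) * ((B * Cdot * B * Cdot).trace - (B * Cdot).trace ^ 2 / p)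
        = 1 / (1 - θ ^ 2) ^ 2) := by
  have hp2 : (2:ℝ) ≤ (p:ℝ) := by exact_mod_cast hp
  have hp0 : (0:ℝ) < (p:ℝ) - 1 := by linarith
  have h1 : (1 - θ) ≠ 0 := by linarith
  have h2 : ((p:ℝ) - 1) * θ + 1 ≠ 0 := by
    have hne : ((p:ℝ) - 1) ≠ 0 := ne_of_gt hp0
    have h := mul_lt_mul_of_pos_left hθlo hp0
    rw [mul_neg, mul_one_div, div_self hne] at h
    linarith
  -- abbreviations
  set a : ℝ := (1 - θ)⁻¹ with ha
  set b : ℝ := -θ / ((1 - θ) * (((p:ℝ) - 1) * θ + 1)) with hb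
  set c : ℝ := a + ((p:ℝ) - 1) * b with hc
  have hJJ : J * J = (p:ℝ) • J := by
    ext i j
    simp [Matrix.mul_apply, hJ, Matrix.smul_apply]
  have htrJ : J.trace = (p:ℝ) := by
    simp [Matrix.trace, Matrix.diag, hJ]
  have htrI : (1 : Matrix (Fin p) (Fin p) ℝ).trace = (p:ℝ) := by
    simp
  -- B is explicitly a•1 + b•J
  have hBeq : B = a • (1 : Matrix (Fin p) (Fin p) ℝ) + b • J := by
    rw [hB]
    refine Matrix.inv_eq_right_inv ?_
    rw [hC]
    have expand : ((1 - θ) • (1 : Matrix (Fin p) (Fin p) ℝ) + θ • J) *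
        (a • (1 : Matrix (Fin p) (Fin p) ℝ) + b • J)
        = ((1 - θ) * a) • (1 : Matrix (Fin p) (Fin p) ℝ)
          + ((1 - θ) * b + θ * a + θ * ((p:ℝ) * b)) • J := by
      simp only [Matrix.add_mul, Matrix.mul_add, Matrix.smul_mul, Matrix.mul_smul,
        Matrix.one_mul, Matrix.mul_one, hJJ, smul_smul]
      module
    rw [expand]
    have e1 : (1 - θ) * a = 1 := by
      rw [ha]; field_simp
    have e2 : (1 - θ) * b + θ * a + θ * ((p:ℝ) * b) = 0 := by
      have h2' : 1 - θ + θ * (p:ℝ) ≠ 0 := by intro h; apply h2; linarith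
      rw [ha, hb]; field_simp; ring_nf; field_simp; ring
    rw [e1, e2]
    simp
  have hM : B * Cdot = c • J - a • (1 : Matrix (Fin p) (Fin p) ℝ) := by
    rw [hBeq, hCdot, hc]
    simp only [Matrix.mul_sub, Matrix.add_mul, Matrix.smul_mul, Matrix.mul_smul,
      Matrix.one_mul, Matrix.mul_one, hJJ, smul_smul]
    module
  have hMM : B * Cdot * B * Cdot
      = (c ^ 2 * (p:ℝ) - 2 * (a * c)) • J + (a ^ 2) • (1 : Matrix (Fin p) (Fin p) ℝ) := by
    have : B * Cdot * B * Cdot = (B * Cdot) * (B * Cdot) := by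
      rw [Matrix.mul_assoc, Matrix.mul_assoc]
    rw [this, hM]
    simp only [Matrix.mul_sub, Matrix.sub_mul, Matrix.smul_mul, Matrix.mul_smul,
      Matrix.one_mul, Matrix.mul_one, hJJ, smul_smul]
    module
  have htr1 : (B * Cdot).trace = c * (p:ℝ) - a * (p:ℝ) := by
    rw [hM]
    simp [htrJ, htrI]
  have htr2 : (B * Cdot * B * Cdot).trace
      = (c ^ 2 * (p:ℝ) - 2 * (a * c)) * (p:ℝ) + a ^ 2 * (p:ℝ) := by
    rw [hMM]
    simp [htrJ, htrI]
  have hcval : c = ((1 - θ) * (((p:ℝ) - 1) * θ + 1))⁻¹ := by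
    rw [hc, ha, hb]
    field_simp
    have h2'' : θ * ((p:ℝ) - 1) + 1 ≠ 0 := by rw [mul_comm]; exact h2
    rw [eq_div_iff h2'', add_mul, neg_mul, div_mul_cancel₀ _ h2'']
    ring
  have hpne : (p:ℝ) ≠ 0 := by positivity
  have key : (1 / 2) * ((B * Cdot * B * Cdot).trace - (B * Cdot).trace ^ 2 / p)
      = (p : ℝ) * ((p : ℝ) - 1) / (2 * (((p : ℝ) - 1) * θ + 1) ^ 2 * (1 - θ) ^ 2) := by
    rw [htr1, htr2]
    have step : (1 / 2) * (((c ^ 2 * (p:ℝ) - 2 * (a * c)) * (p:ℝ) + a ^ 2 * (p:ℝ))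
        - (c * (p:ℝ) - a * (p:ℝ)) ^ 2 / p) = (p:ℝ) * ((p:ℝ) - 1) * c ^ 2 / 2 := by
      field_simp
      ring
    rw [step, hcval]
    field_simp
  refine ⟨key, fun hp2' => ?_⟩
  rw [key]
  subst hp2'
  have hθm1 : -(1:ℝ) < θ := by
    have : -(1 / ((2:ℝ) - 1)) = -1 := by norm_num
    rw [show ((2:ℕ):ℝ) = (2:ℝ) from by norm_num, this] at hθlo
    exact hθlo
  have ha1 : (1:ℝ) + θ ≠ 0 := by linarith
  have hsq : (1:ℝ) - θ ^ 2 ≠ 0 := by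
    have : (1:ℝ) - θ ^ 2 = (1 - θ) * (1 + θ) := by ring
    rw [this]
    exact mul_ne_zero h1 ha1
  push_cast
  have e : (2:ℝ) * (((2:ℝ) - 1) * θ + 1) ^ 2 * (1 - θ) ^ 2 = 2 * ((1 - θ ^ 2) ^ 2) := by
    ring
  rw [e, div_eq_div_iff (by positivity) (pow_ne_zero 2 hsq)]
  ring
end

section
/- Let θ ∈ (−1, 1) and let C(θ) be the 4 × 4 circular correlation matrix with rows (1, θ, θ², θ), (θ, 1, θ, θ²), (θ², θ, 1, θ), (θ, θ², θ, 1), and let Ċ(θ) be its entrywise derivative in θ, the matrix with rows (0, 1, 2θ, 1), (1, 0, 1, 2θ), (2θ, 1, 0, 1), (1, 2θ, 1, 0). Then C(θ) is invertible and, with B = C(θ)⁻¹, (1/2) · tr( B Ċ B Ċ ) = 4 (1 + 2θ²) / (1 − θ²)². -/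
open Matrix

set_option maxHeartbeats 2000000 in
/-- Fisher information for the 4×4 circular correlation model with first row
`(1, θ, θ², θ)`: `C(θ)` is invertible and, with `B = C(θ)⁻¹` and `Ċ` its entrywise
θ-derivative, `(1/2) tr(BĊBĊ) = 4(1+2θ²)/(1-θ²)²`. -/
theorem circular_information_known_margins
    (θ : ℝ) (hθlo : -1 < θ) (hθhi : θ < 1)
    (C : Matrix (Fin 4) (Fin 4) ℝ)
    (hC : C = !![1, θ, θ ^ 2, θ; θ, 1, θ, θ ^ 2; θ ^ 2, θ, 1, θ; θ, θ ^ 2, θ, 1])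
    (Cdot : Matrix (Fin 4) (Fin 4) ℝ)
    (hCdot : Cdot = !![0, 1, 2 * θ, 1; 1, 0, 1, 2 * θ; 2 * θ, 1, 0, 1; 1, 2 * θ, 1, 0]) :
    IsUnit C ∧
      (1 / 2) * (C⁻¹ * Cdot * C⁻¹ * Cdot).trace
        = 4 * (1 + 2 * θ ^ 2) / (1 - θ ^ 2) ^ 2 := by
  have h1 : (1 : ℝ) - θ ^ 2 ≠ 0 := by nlinarith
  have hd : ((1 : ℝ) - θ ^ 2) ^ 2 ≠ 0 := pow_ne_zero _ h1
  set d : ℝ := ((1 : ℝ) - θ ^ 2) ^ 2 with hdd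
  set B : Matrix (Fin 4) (Fin 4) ℝ :=
    !![1/d, -θ/d, θ^2/d, -θ/d; -θ/d, 1/d, -θ/d, θ^2/d;
       θ^2/d, -θ/d, 1/d, -θ/d; -θ/d, θ^2/d, -θ/d, 1/d] with hB
  have hCB : C * B = 1 := by
    subst hC
    ext i j
    fin_cases i <;> fin_cases j <;>
      simp [hB, Matrix.mul_apply, Fin.sum_univ_four, Matrix.one_apply] <;>
      field_simp <;> ring
  have hUnit : IsUnit C := by
    have := Matrix.isUnit_det_of_right_inverse hCB
    exact (Matrix.isUnit_iff_isUnit_det C).mpr this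
  have hInv : C⁻¹ = B := Matrix.inv_eq_right_inv hCB
  refine ⟨hUnit, ?_⟩
  rw [hInv]
  subst hCdot
  rw [Matrix.trace]
  simp [hB, Matrix.mul_apply, Fin.sum_univ_four, Matrix.diag]
  field_simp
  ring
end

section
/- Let θ ∈ (−1, 1), let C(θ) be the 4 × 4 circular correlation matrix with first row (1, θ, θ², θ) (symmetric circulant), let Ċ(θ) be its entrywise θ-derivative (circulant with first row (0, 1, 2θ, 1)), and let B = C(θ)⁻¹. Then (1/2) [ tr( B Ċ B Ċ ) − tr( B Ċ )² / 4 ] = 4 / (1 − θ²)². -/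
open Matrix
set_option maxHeartbeats 2000000

/-- Efficient Fisher information for the 4×4 circular correlation model with first row
`(1, θ, θ², θ)`: with `B = C(θ)⁻¹` and `Ċ` the entrywise θ-derivative,
`(1/2)[tr(BĊBĊ) - tr(BĊ)²/4] = 4/(1-θ²)²`. -/
theorem circular_efficient_information
    (θ : ℝ) (hθlo : -1 < θ) (hθhi : θ < 1)
    (C : Matrix (Fin 4) (Fin 4) ℝ)
    (hC : C = !![1, θ, θ ^ 2, θ; θ, 1, θ, θ ^ 2; θ ^ 2, θ, 1, θ; θ, θ ^ 2, θ, 1])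
    (Cdot : Matrix (Fin 4) (Fin 4) ℝ)
    (hCdot : Cdot = !![0, 1, 2 * θ, 1; 1, 0, 1, 2 * θ; 2 * θ, 1, 0, 1; 1, 2 * θ, 1, 0])
    (B : Matrix (Fin 4) (Fin 4) ℝ) (hB : B = C⁻¹) :
    (1 / 2) * ((B * Cdot * B * Cdot).trace - (B * Cdot).trace ^ 2 / 4)
      = 4 / (1 - θ ^ 2) ^ 2 := by
  have h1 : (0:ℝ) < 1 - θ ^ 2 := by nlinarith
  have hd : ((1 - θ ^ 2) ^ 2 : ℝ) ≠ 0 := by positivity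
  have hB2 : B = ((1 - θ ^ 2) ^ 2)⁻¹ •
      !![1, -θ, θ ^ 2, -θ; -θ, 1, -θ, θ ^ 2; θ ^ 2, -θ, 1, -θ; -θ, θ ^ 2, -θ, 1] := by
    rw [hB, hC]
    apply Matrix.inv_eq_right_inv
    ext i j
    fin_cases i <;> fin_cases j <;>
      simp [Matrix.mul_apply, Fin.sum_univ_four, Matrix.smul_apply] <;>
      field_simp <;> ring
  subst hB2 hCdot
  simp only [Matrix.trace, Matrix.diag, Fin.sum_univ_four, Matrix.mul_apply,
    Matrix.smul_apply, Matrix.of_apply, Matrix.cons_val', Matrix.cons_val_zero,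
    Matrix.cons_val_one, Matrix.head_cons, Matrix.empty_val', Matrix.cons_val_fin_one,
    Matrix.head_fin_const, smul_eq_mul, Matrix.cons_val_two, Matrix.tail_cons,
    Matrix.cons_val_three]
  field_simp
  ring
end
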